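/- The graded dimension of the vacuum module of the A1, ℓ=4 lattice vertex algebra equals the Neveu–Schwarz symplectic fermion character: Σ_{k ∈ 4ℤ} t^{(1/8)(k²−2k)+1/8} / ∏_{m≥1}(1−t^m) = ∏_{m≥1}(1+t^m)², as formal power series. -/

import Mathlib

open Finset Filter Real

noncomputable def Dq (Q : ℝ) (m : ℕ) : ℝ := ∏ j ∈ range m, (1 - Q ^ (j + 1))

noncomputable def Aq (Q : ℝ) (n m : ℕ) : ℝ := ∏ j ∈ range m, (1 - Q ^ (n - j))

noncomputable def qbin (Q : ℝ) (n m : ℕ) : ℝ := Aq Q n m / Dq Q m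

/-- triangular numbers -/
def Tn (m : ℕ) : ℕ := ∑ j ∈ range m, j

lemma Tn_succ (m : ℕ) : Tn (m + 1) = Tn m + m := Finset.sum_range_succ _ m

lemma Tn_cast (m : ℕ) : 2 * (Tn m : ℝ) = (m : ℝ) ^ 2 - m := by
  induction m with
  | zero => simp [Tn]
  | succ n ih => rw [Tn_succ]; push_cast; push_cast at ih; nlinarith [ih]

section Q
variable {Q : ℝ} (hQ : ∀ m : ℕ, 1 - Q ^ (m + 1) ≠ 0)

include hQ in
lemma Dq_ne (m : ℕ) : Dq Q m ≠ 0 := Finset.prod_ne_zero_iff.2 fun j _ => hQ j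

lemma Dq_succ (m : ℕ) : Dq Q (m + 1) = Dq Q m * (1 - Q ^ (m + 1)) :=
  Finset.prod_range_succ _ m

lemma Aq_succ_succ (n m : ℕ) : Aq Q (n + 1) (m + 1) = (1 - Q ^ (n + 1)) * Aq Q n m := by
  rw [Aq, Finset.prod_range_succ']
  simp only [Nat.succ_sub_succ_eq_sub, Nat.sub_zero]
  rw [mul_comm]; rfl

lemma Aq_succ (n m : ℕ) : Aq Q n (m + 1) = Aq Q n m * (1 - Q ^ (n - m)) :=
  Finset.prod_range_succ _ m

lemma Aq_diag_succ (n : ℕ) : Aq Q n (n + 1) = 0 := by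
  rw [Aq_succ, Nat.sub_self, pow_zero]; simp

lemma qbin_zero (n : ℕ) : qbin Q n 0 = 1 := by simp [qbin, Aq, Dq]

include hQ in
lemma qbin_pascal {n m : ℕ} (h : m ≤ n) :
    qbin Q (n + 1) (m + 1) = qbin Q n (m + 1) + Q ^ (n - m) * qbin Q n m := by
  have hD : Dq Q m ≠ 0 := Dq_ne hQ m
  have hDm : (1 : ℝ) - Q ^ (m + 1) ≠ 0 := hQ m
  have key : Q ^ (n - m) * Q ^ (m + 1) = Q ^ (n + 1) := by
    rw [← pow_add]; congr 1; omega
  have key2 : Q ^ (n - m) * Q ^ m = Q ^ n := by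
    rw [← pow_add]; congr 1; omega
  rw [qbin, qbin, qbin, Aq_succ_succ, Aq_succ, Dq_succ]
  field_simp
  linear_combination (Aq Q n m) * key

include hQ in
lemma qbinom (x : ℝ) : ∀ n : ℕ,
    ∏ i ∈ range n, (1 + x * Q ^ i)
      = ∑ m ∈ range (n + 1), Q ^ Tn m * qbin Q n m * x ^ m := by
  intro n
  induction n with
  | zero => simp [Tn, qbin_zero]
  | succ n ih =>
    rw [Finset.prod_range_succ, ih]
    rw [Finset.sum_range_succ' (fun m => Q ^ Tn m * qbin Q (n+1) m * x ^ m) (n+1)]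
    have h1 : ∀ m ∈ range (n + 1),
        Q ^ Tn (m+1) * qbin Q (n+1) (m+1) * x ^ (m+1)
          = Q ^ Tn (m+1) * qbin Q n (m+1) * x ^ (m+1)
            + (Q ^ Tn m * qbin Q n m * x ^ m) * (x * Q ^ n) := by
      intro m hm
      have hmn : m ≤ n := by simpa using Nat.lt_succ_iff.mp (Finset.mem_range.mp hm)
      rw [qbin_pascal hQ hmn]
      have : Q ^ Tn (m+1) * Q ^ (n - m) = Q ^ Tn m * Q ^ n := by
        rw [← pow_add, ← pow_add]; congr 1; rw [Tn_succ]; omega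
      linear_combination (qbin Q n m * x ^ (m + 1)) * this
    rw [Finset.sum_congr rfl h1, Finset.sum_add_distrib]
    have h2 : ∑ m ∈ range (n+1), Q ^ Tn (m+1) * qbin Q n (m+1) * x ^ (m+1)
        + Q ^ Tn 0 * qbin Q (n+1) 0 * x ^ 0
        = ∑ m ∈ range (n+1+1), Q ^ Tn m * qbin Q n m * x ^ m := by
      rw [Finset.sum_range_succ' (fun m => Q ^ Tn m * qbin Q n m * x ^ m) (n+1)]
      simp [qbin_zero]
    have h3 : ∑ m ∈ range (n+1+1), Q ^ Tn m * qbin Q n m * x ^ m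
        = ∑ m ∈ range (n+1), Q ^ Tn m * qbin Q n m * x ^ m := by
      rw [Finset.sum_range_succ]
      simp [qbin, Aq_diag_succ]
    have h4 : ∑ m ∈ range (n+1), (Q ^ Tn m * qbin Q n m * x ^ m) * (x * Q ^ n)
        = (∑ m ∈ range (n+1), Q ^ Tn m * qbin Q n m * x ^ m) * (x * Q ^ n) :=
      (Finset.sum_mul _ _ _).symm
    rw [h4]
    linear_combination (h2.trans h3).symm

end Q

section T
variable {t : ℝ} (h0 : 0 < t) (h1 : t < 1)

include h0 h1 in
lemma sum_geom_pow (e : ℕ → ℕ) (he : ∀ n, n ≤ e n) (c : ℝ) (hc : 0 ≤ c) :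
    Summable (fun n : ℕ => c * t ^ e n) := by
  apply Summable.of_nonneg_of_le (fun n => by positivity)
    (fun n => ?_) ((summable_geometric_of_lt_one h0.le h1).mul_left c)
  exact mul_le_mul_of_nonneg_left
    (pow_le_pow_of_le_one h0.le h1.le (he n)) hc

include h0 h1 in
/-- master lemma: infinite products of factors squeezed between `1 - t^(n+1)` and
`1 + t^(n+1)` converge and are positive. -/
lemma master (g : ℕ → ℝ) (hg1 : ∀ n, 1 - t ^ (n + 1) ≤ g n)
    (hg2 : ∀ n, g n ≤ 1 + t ^ (n + 1)) :
    HasProd g (∏' n, g n) ∧ 0 < ∏' n, g n := by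
  have hpow : ∀ n : ℕ, 0 < 1 - t ^ (n + 1) := fun n =>
    sub_pos.2 (pow_lt_one₀ h0.le h1 n.succ_ne_zero)
  have hpos : ∀ n, 0 < g n := fun n => lt_of_lt_of_le (hpow n) (hg1 n)
  have h1t : 0 < 1 - t := sub_pos.2 h1
  have hlog : Summable fun n => Real.log (g n) := by
    apply Summable.of_norm_bounded (g := fun n => (1 - t)⁻¹ * t ^ (n + 1))
      (sum_geom_pow h0 h1 (fun n => n + 1) (fun n => Nat.le_succ n) ((1 - t)⁻¹)
        (by positivity))
    intro n
    rw [Real.norm_eq_abs, abs_le]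
    constructor
    · have l1 : Real.log (1 - t ^ (n + 1)) ≤ Real.log (g n) :=
        Real.log_le_log (hpow n) (hg1 n)
      have l2 : Real.log ((1 - t ^ (n + 1))⁻¹) ≤ (1 - t ^ (n + 1))⁻¹ - 1 :=
        Real.log_le_sub_one_of_pos (inv_pos.2 (hpow n))
      rw [Real.log_inv] at l2
      have l3 : (1 - t ^ (n + 1))⁻¹ - 1 ≤ (1 - t)⁻¹ * t ^ (n + 1) := by
        have hb := hpow n
        have hinv : (1 - t ^ (n+1))⁻¹ * (1 - t ^ (n+1)) = 1 :=
          inv_mul_cancel₀ (ne_of_gt hb)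
        have hmono : 1 - t ≤ 1 - t ^ (n+1) := by
          have : t ^ (n+1) ≤ t := by
            simpa using pow_le_pow_of_le_one h0.le h1.le
              (Nat.one_le_iff_ne_zero.2 n.succ_ne_zero)
          linarith
        have hc : (1 - t ^ (n+1))⁻¹ ≤ (1 - t)⁻¹ := by gcongr
        nlinarith [pow_nonneg h0.le (n+1),
          mul_le_mul_of_nonneg_right hc (pow_nonneg h0.le (n+1))]
      linarith
    · have l1 : Real.log (g n) ≤ Real.log (1 + t ^ (n + 1)) :=
        Real.log_le_log (hpos n) (hg2 n)
      have l2 : Real.log (1 + t ^ (n + 1)) ≤ t ^ (n + 1) := by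
        have := Real.log_le_sub_one_of_pos
          (show (0:ℝ) < 1 + t ^ (n+1) by positivity)
        linarith
      have l3 : t ^ (n + 1) ≤ (1 - t)⁻¹ * t ^ (n + 1) := by
        have h2 : (1:ℝ) ≤ (1 - t)⁻¹ := one_le_inv_iff₀.2 ⟨h1t, by linarith⟩
        nlinarith [pow_nonneg h0.le (n+1)]
      linarith
  have hfn : ∀ (_ : Unit) n, 0 < (fun n (_ : Unit) => g n) n () := fun _ n => hpos n
  have hHP : HasProd g (∏' n, g n) := by
    have := (Real.hasProd_of_hasSum_log hpos hlog.hasSum).multipliable.hasProd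
    exact this
  refine ⟨hHP, ?_⟩
  have := Real.rexp_tsum_eq_tprod hpos hlog
  rw [← this]
  exact Real.exp_pos _
end T
section T
variable {t : ℝ} (h0 : 0 < t) (h1 : t < 1)

include h0 h1 in
lemma hQfac : ∀ m : ℕ, 1 - (t ^ 4) ^ (m + 1) ≠ 0 := by
  intro m
  have : (t ^ 4) ^ (m + 1) < 1 :=
    pow_lt_one₀ (by positivity) (pow_lt_one₀ h0.le h1 (by norm_num)) (Nat.succ_ne_zero m)
  intro h; linarith [this, sub_eq_zero.mp h]

lemma sum_4j3 (N : ℕ) : ∑ j ∈ range N, (4 * j + 3) = 2 * N ^ 2 + N := by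
  induction N with
  | zero => simp
  | succ n ih => rw [Finset.sum_range_succ, ih]; ring

include h0 h1 in
lemma finId (N : ℕ) :
    ∑ m ∈ range (2 * N + 1),
        qbin (t ^ 4) (2 * N) m * t ^ (2 * ((m : ℝ) - N) ^ 2 - ((m : ℝ) - N))
      = (∏ j ∈ range N, (1 + t ^ (4 * j + 3))) * ∏ i ∈ range N, (1 + t ^ (4 * i + 1)) := by
  have hQ := hQfac h0 h1
  set x : ℝ := t ^ ((1 : ℝ) - 4 * N) with hx
  have hq := qbinom hQ x (2 * N)
  have key : (t : ℝ) ^ (((2 * N ^ 2 + N : ℕ) : ℝ)) * ∏ i ∈ range (2 * N), (1 + x * (t ^ 4) ^ i)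
      = ∑ m ∈ range (2 * N + 1),
          qbin (t ^ 4) (2 * N) m * t ^ (2 * ((m : ℝ) - N) ^ 2 - ((m : ℝ) - N)) := by
    rw [hq, Finset.mul_sum]
    apply Finset.sum_congr rfl
    intro m hm
    have e1 : ((t : ℝ) ^ 4) ^ Tn m = t ^ ((4 * Tn m : ℕ) : ℝ) := by
      rw [← pow_mul, Real.rpow_natCast]
    have e2 : x ^ m = t ^ (((1 : ℝ) - 4 * N) * m) := by
      rw [hx, ← Real.rpow_natCast (t ^ ((1 : ℝ) - 4 * N)) m, ← Real.rpow_mul h0.le]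
    rw [e1, e2]
    have hre : ∀ a b c : ℝ, t ^ a * (t ^ b * qbin (t ^ 4) (2 * N) m * t ^ c)
        = qbin (t ^ 4) (2 * N) m * t ^ (a + b + c) := by
      intro a b c; rw [Real.rpow_add h0, Real.rpow_add h0]; ring
    rw [hre]
    congr 1
    congr 1
    have hT := Tn_cast m
    push_cast
    push_cast at hT
    linear_combination 2 * hT
  rw [← key]
  rw [show 2 * N = N + N by ring, Finset.prod_range_add]
  rw [← Finset.prod_range_reflect (fun j => 1 + x * (t ^ 4) ^ j) N]
  have tPow : (t : ℝ) ^ (((2 * N ^ 2 + N : ℕ) : ℝ)) = ∏ j ∈ range N, t ^ (4 * j + 3) := by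
    rw [Real.rpow_natCast, Finset.prod_pow_eq_pow_sum, sum_4j3]
  rw [tPow, ← mul_assoc, ← Finset.prod_mul_distrib]
  congr 1
  · apply Finset.prod_congr rfl
    intro j hj
    have hj' : j < N := Finset.mem_range.mp hj
    have hxq : x * (t ^ 4) ^ (N - 1 - j) = t ^ (-(4 * (j : ℝ) + 3)) := by
      rw [hx, ← pow_mul, ← Real.rpow_natCast t (4 * (N - 1 - j)), ← Real.rpow_add h0]
      congr 1
      have h4 : (4 * (N - 1 - j) : ℕ) = 4 * N - (4 * j + 4) := by omega
      rw [h4, Nat.cast_sub (by omega)]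
      push_cast
      ring
    rw [hxq, ← Real.rpow_natCast t (4 * j + 3)]
    rw [mul_add, mul_one, ← Real.rpow_add h0]
    have : ((4 * j + 3 : ℕ) : ℝ) + -(4 * (j : ℝ) + 3) = 0 := by push_cast; ring
    rw [this, Real.rpow_zero]
    rw [add_comm]
  · apply Finset.prod_congr rfl
    intro i _
    congr 1
    rw [hx, ← pow_mul, ← Real.rpow_natCast t (4 * (N + i)), ← Real.rpow_add h0]
    have : (1 - 4 * (N : ℝ)) + ((4 * (N + i) : ℕ) : ℝ) = ((4 * i + 1 : ℕ) : ℝ) := by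
      push_cast; ring
    rw [this, Real.rpow_natCast]
end T
section T
variable {t : ℝ} (h0 : 0 < t) (h1 : t < 1)

include h0 h1 in
lemma tpow_le (a b : ℕ) (h : a ≤ b) : t ^ b ≤ t ^ a := pow_le_pow_of_le_one h0.le h1.le h

include h0 h1 in
lemma masterP4 : HasProd (fun j : ℕ => 1 - (t ^ 4) ^ (j + 1)) (∏' j : ℕ, (1 - (t ^ 4) ^ (j + 1)))
    ∧ 0 < ∏' j : ℕ, (1 - (t ^ 4) ^ (j + 1)) := by
  apply master h0 h1
  · intro n
    have : (t ^ 4) ^ (n + 1) ≤ t ^ (n + 1) := by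
      rw [← pow_mul]; exact tpow_le h0 h1 _ _ (by omega)
    linarith
  · intro n
    have h2 : (0:ℝ) < (t ^ 4) ^ (n + 1) := by positivity
    have h3 : (0:ℝ) ≤ t ^ (n + 1) := by positivity
    linarith

-- the key limit facts about Dq
include h0 h1 in
lemma Dq_tendsto : Filter.Tendsto (fun m => Dq (t ^ 4) m) atTop
    (nhds (∏' j : ℕ, (1 - (t ^ 4) ^ (j + 1)))) :=
  (masterP4 h0 h1).1.tendsto_prod_nat

include h0 h1 in
lemma Dq_fac_bounds (j : ℕ) : 0 < 1 - (t ^ 4) ^ (j + 1) ∧ 1 - (t ^ 4) ^ (j + 1) ≤ 1 := by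
  constructor
  · have : (t ^ 4) ^ (j + 1) < 1 :=
      pow_lt_one₀ (by positivity) (pow_lt_one₀ h0.le h1 (by norm_num)) (Nat.succ_ne_zero j)
    linarith
  · have : (0:ℝ) ≤ (t ^ 4) ^ (j + 1) := by positivity
    linarith

include h0 h1 in
lemma Dq_pos (m : ℕ) : 0 < Dq (t ^ 4) m :=
  Finset.prod_pos fun j _ => (Dq_fac_bounds h0 h1 j).1

include h0 h1 in
lemma Dq_anti : Antitone (fun m => Dq (t ^ 4) m) := by
  apply antitone_nat_of_succ_le
  intro n
  have h := Finset.prod_range_succ (fun j => 1 - (t ^ 4) ^ (j + 1)) n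
  show Dq (t ^ 4) (n + 1) ≤ Dq (t ^ 4) n
  rw [Dq, h]
  have h1' := (Dq_fac_bounds h0 h1 n).2
  have h2 := Dq_pos h0 h1 n
  rw [Dq] at h2 ⊢
  nlinarith [(Dq_fac_bounds h0 h1 n).1]

include h0 h1 in
lemma Dq_ge (m : ℕ) : (∏' j : ℕ, (1 - (t ^ 4) ^ (j + 1))) ≤ Dq (t ^ 4) m := by
  apply le_of_tendsto (Dq_tendsto h0 h1)
  filter_upwards [eventually_ge_atTop m] with n hn
  exact Dq_anti h0 h1 hn

include h0 h1 in
lemma Aq_bounds (n m : ℕ) : 0 ≤ Aq (t ^ 4) n m ∧ Aq (t ^ 4) n m ≤ 1 := by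
  constructor
  · apply Finset.prod_nonneg
    intro j _
    have : (t ^ 4) ^ (n - j) ≤ 1 :=
      pow_le_one₀ (by positivity) (pow_le_one₀ h0.le h1.le)
    linarith
  · apply Finset.prod_le_one
    · intro j _
      have : (t ^ 4) ^ (n - j) ≤ 1 :=
        pow_le_one₀ (by positivity) (pow_le_one₀ h0.le h1.le)
      linarith
    · intro j _
      have : (0:ℝ) ≤ (t ^ 4) ^ (n - j) := by positivity
      linarith

include h0 h1 in
lemma qbin_nonneg (n m : ℕ) : 0 ≤ qbin (t ^ 4) n m :=
  div_nonneg (Aq_bounds h0 h1 n m).1 (Dq_pos h0 h1 m).le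

include h0 h1 in
lemma qbin_le (n m : ℕ) :
    qbin (t ^ 4) n m ≤ (∏' j : ℕ, (1 - (t ^ 4) ^ (j + 1)))⁻¹ := by
  have hP := (masterP4 h0 h1).2
  rw [qbin, ← one_div]
  exact div_le_div₀ zero_le_one (Aq_bounds h0 h1 n m).2 hP (Dq_ge h0 h1 m)

include h0 h1 in
lemma qbin_rep {n m : ℕ} (h : m ≤ n) :
    qbin (t ^ 4) n m = Dq (t ^ 4) n / (Dq (t ^ 4) (n - m) * Dq (t ^ 4) m) := by
  have hA : Aq (t ^ 4) n m * Dq (t ^ 4) (n - m) = Dq (t ^ 4) n := by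
    have h1' : Aq (t ^ 4) n m = ∏ j ∈ range m, (1 - (t ^ 4) ^ ((n - m) + (j + 1))) := by
      rw [Aq, ← Finset.prod_range_reflect (fun j => 1 - (t ^ 4) ^ (n - j)) m]
      apply Finset.prod_congr rfl
      intro j hj
      have hj' : j < m := Finset.mem_range.mp hj
      congr 2
      omega
    have hsplit : Dq (t ^ 4) ((n - m) + m)
        = Dq (t ^ 4) (n - m) * ∏ j ∈ range m, (1 - (t ^ 4) ^ ((n - m) + (j + 1))) := by
      rw [Dq, Dq, Finset.prod_range_add]
      exact congrArg _ (Finset.prod_congr rfl fun j _ => by rw [add_assoc])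
    rw [show (n - m) + m = n by omega] at hsplit
    rw [h1', mul_comm, hsplit]
  have d1 := ne_of_gt (Dq_pos h0 h1 m)
  have d2 := ne_of_gt (Dq_pos h0 h1 (n - m))
  rw [qbin, ← hA]
  field_simp
include h0 h1 in
lemma qbin_tendsto (k : ℤ) :
    Filter.Tendsto (fun N : ℕ => qbin (t ^ 4) (2 * N) ((k + N).toNat)) atTop
      (nhds (∏' j : ℕ, (1 - (t ^ 4) ^ (j + 1)))⁻¹) := by
  set P : ℝ := ∏' j : ℕ, (1 - (t ^ 4) ^ (j + 1)) with hP
  have hPpos := (masterP4 h0 h1).2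
  have hcomp : ∀ u : ℕ → ℕ, Filter.Tendsto u atTop atTop →
      Filter.Tendsto (fun N => Dq (t ^ 4) (u N)) atTop (nhds P) :=
    fun u hu => (Dq_tendsto h0 h1).comp hu
  have t1 : Filter.Tendsto (fun N : ℕ => Dq (t ^ 4) (2 * N)) atTop (nhds P) :=
    hcomp _ (tendsto_atTop_atTop.mpr fun b => ⟨b, fun a ha => by omega⟩)
  have t2 : Filter.Tendsto (fun N : ℕ => Dq (t ^ 4) ((N - k).toNat)) atTop (nhds P) :=
    hcomp _ (tendsto_atTop_atTop.mpr fun b => ⟨b + k.natAbs, fun a ha => by omega⟩)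
  have t3 : Filter.Tendsto (fun N : ℕ => Dq (t ^ 4) ((k + N).toNat)) atTop (nhds P) :=
    hcomp _ (tendsto_atTop_atTop.mpr fun b => ⟨b + k.natAbs, fun a ha => by omega⟩)
  have tq : Filter.Tendsto
      (fun N : ℕ => Dq (t ^ 4) (2 * N) / (Dq (t ^ 4) ((N - k).toNat) * Dq (t ^ 4) ((k + N).toNat)))
      atTop (nhds (P / (P * P))) :=
    t1.div (t2.mul t3) (by positivity)
  have hval : P / (P * P) = P⁻¹ := by
    rw [div_mul_eq_div_div, div_self (ne_of_gt hPpos), one_div]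
  rw [hval] at tq
  apply tq.congr'
  filter_upwards [eventually_ge_atTop k.natAbs] with N hN
  have hm : (k + N).toNat ≤ 2 * N := by omega
  rw [qbin_rep h0 h1 hm]
  congr 3
  omega

noncomputable def FF (t : ℝ) (N : ℕ) (k : ℤ) : ℝ :=
  if k.natAbs ≤ N then t ^ (2 * (k : ℝ) ^ 2 - (k : ℝ)) * qbin (t ^ 4) (2 * N) ((k + N).toNat)
  else 0

include h0 h1 in
lemma S_summable : Summable (fun k : ℤ => t ^ (2 * (k : ℝ) ^ 2 - (k : ℝ))) := by
  have geo := summable_geometric_of_lt_one h0.le h1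
  apply Summable.of_nat_of_neg
  · apply Summable.of_nonneg_of_le (fun n => (Real.rpow_pos_of_pos h0 _).le) (fun n => ?_) geo
    rw [← Real.rpow_natCast t n]
    apply Real.rpow_le_rpow_of_exponent_ge h0 h1.le
    rcases Nat.eq_zero_or_pos n with h | h
    · simp [h]
    · have hn : (1 : ℝ) ≤ ((n : ℤ) : ℝ) := by exact_mod_cast h
      push_cast
      push_cast at hn
      nlinarith
  · apply Summable.of_nonneg_of_le (fun n => (Real.rpow_pos_of_pos h0 _).le) (fun n => ?_) geo
    rw [← Real.rpow_natCast t n]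
    apply Real.rpow_le_rpow_of_exponent_ge h0 h1.le
    have hn : (0 : ℝ) ≤ (n : ℝ) := Nat.cast_nonneg n
    push_cast
    nlinarith

include h0 h1 in
lemma FF_tsum (N : ℕ) : ∑' k : ℤ, FF t N k
    = ∑ m ∈ range (2 * N + 1),
        qbin (t ^ 4) (2 * N) m * t ^ (2 * ((m : ℝ) - N) ^ 2 - ((m : ℝ) - N)) := by
  rw [tsum_eq_sum (s := Finset.Icc (-(N : ℤ)) N)
    (fun k hk => by rw [FF, if_neg]; simp only [Finset.mem_Icc] at hk; omega)]
  apply Finset.sum_nbij' (i := fun k : ℤ => (k + N).toNat) (j := fun m : ℕ => (m : ℤ) - N)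
  · intro k hk; simp only [Finset.mem_Icc] at hk; simp only [Finset.mem_range]; omega
  · intro m hm; simp only [Finset.mem_range] at hm; simp only [Finset.mem_Icc]; omega
  · intro k hk; simp only [Finset.mem_Icc] at hk; omega
  · intro m hm; simp only [Finset.mem_range] at hm; omega
  · intro k hk
    simp only [Finset.mem_Icc] at hk
    rw [FF, if_pos (by omega)]
    have hc : (((k + N).toNat : ℕ) : ℝ) = (k : ℝ) + N := by
      have h := Int.toNat_of_nonneg (show (0 : ℤ) ≤ k + N by omega)
      exact_mod_cast congrArg (Int.cast : ℤ → ℝ) h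
    rw [hc, show (k : ℝ) + N - N = (k : ℝ) by ring, mul_comm]

include h0 h1 in
lemma masterPo (c d : ℕ) (hc : 1 ≤ c) :
    HasProd (fun j : ℕ => 1 + t ^ (c * j + d + 1)) (∏' j : ℕ, (1 + t ^ (c * j + d + 1)))
      ∧ 0 < ∏' j : ℕ, (1 + t ^ (c * j + d + 1)) := by
  apply master h0 h1
  · intro n
    have h2 : (0:ℝ) < t ^ (c * n + d + 1) := by positivity
    have h3 : (0:ℝ) < t ^ (n + 1) := by positivity
    linarith
  · intro n
    have := tpow_le h0 h1 (n + 1) (c * n + d + 1) (by nlinarith)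
    linarith

include h0 h1 in
lemma main_limit :
    (∑' k : ℤ, t ^ (2 * (k : ℝ) ^ 2 - (k : ℝ)))
      = (∏' j : ℕ, (1 + t ^ (4 * j + 3))) * (∏' j : ℕ, (1 + t ^ (4 * j + 1)))
          * (∏' j : ℕ, (1 - (t ^ 4) ^ (j + 1))) := by
  set P : ℝ := ∏' j : ℕ, (1 - (t ^ 4) ^ (j + 1)) with hPdef
  have hPpos := (masterP4 h0 h1).2
  have ho3 := masterPo h0 h1 4 2 (by norm_num)
  have ho1 := masterPo h0 h1 4 0 (by norm_num)
  simp only [show ∀ j : ℕ, 4 * j + 2 + 1 = 4 * j + 3 from fun j => rfl,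
    show ∀ j : ℕ, 4 * j + 0 + 1 = 4 * j + 1 from fun j => rfl] at ho3 ho1
  have hdom : Filter.Tendsto (fun N => ∑' k : ℤ, FF t N k) atTop
      (nhds (∑' k : ℤ, t ^ (2 * (k : ℝ) ^ 2 - (k : ℝ)) * P⁻¹)) := by
    apply tendsto_tsum_of_dominated_convergence
      (bound := fun k : ℤ => t ^ (2 * (k : ℝ) ^ 2 - (k : ℝ)) * P⁻¹)
      ((S_summable h0 h1).mul_right _)
    · intro k
      apply Filter.Tendsto.congr' ?_ ((qbin_tendsto h0 h1 k).const_mul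
        (t ^ (2 * (k : ℝ) ^ 2 - (k : ℝ))))
      filter_upwards [eventually_ge_atTop k.natAbs] with N hN
      rw [FF, if_pos hN]
    · apply Filter.Eventually.of_forall
      intro N k
      rw [FF]
      split_ifs with hcase
      · rw [Real.norm_eq_abs, abs_of_nonneg (mul_nonneg (Real.rpow_pos_of_pos h0 _).le
          (qbin_nonneg h0 h1 _ _))]
        exact mul_le_mul_of_nonneg_left (qbin_le h0 h1 _ _) (Real.rpow_pos_of_pos h0 _).le
      · rw [norm_zero]
        exact mul_nonneg (Real.rpow_pos_of_pos h0 _).le (inv_nonneg.2 hPpos.le)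
  have hfin : ∀ N : ℕ, ∑' k : ℤ, FF t N k
      = (∏ j ∈ range N, (1 + t ^ (4 * j + 3))) * ∏ i ∈ range N, (1 + t ^ (4 * i + 1)) :=
    fun N => (FF_tsum h0 h1 N).trans (finId h0 h1 N)
  have hprod : Filter.Tendsto
      (fun N : ℕ => (∏ j ∈ range N, (1 + t ^ (4 * j + 3))) * ∏ i ∈ range N, (1 + t ^ (4 * i + 1)))
      atTop (nhds ((∏' j : ℕ, (1 + t ^ (4 * j + 3))) * ∏' j : ℕ, (1 + t ^ (4 * j + 1)))) :=
    (ho3.1.tendsto_prod_nat).mul (ho1.1.tendsto_prod_nat)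
  have huniq := tendsto_nhds_unique ((hdom.congr hfin)) hprod
  rw [tsum_mul_right] at huniq
  rw [← huniq]
  field_simp
  exact (mul_div_cancel_right₀ _ (ne_of_gt hPpos : P ≠ 0)).symm

include h0 h1 in
lemma master_one_sub : HasProd (fun m : ℕ => 1 - t ^ (m + 1)) (∏' m : ℕ, (1 - t ^ (m + 1)))
    ∧ 0 < ∏' m : ℕ, (1 - t ^ (m + 1)) :=
  master h0 h1 _ (fun n => le_refl _) (fun n => by
    have : (0:ℝ) < t ^ (n + 1) := by positivity
    linarith)

include h0 h1 in
lemma master_one_sub_sq : HasProd (fun m : ℕ => 1 - t ^ (2 * m + 2))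
    (∏' m : ℕ, (1 - t ^ (2 * m + 2))) ∧ 0 < ∏' m : ℕ, (1 - t ^ (2 * m + 2)) :=
  master h0 h1 _
    (fun n => by have := tpow_le h0 h1 (n + 1) (2 * n + 2) (by omega); linarith)
    (fun n => by
      have h2 : (0:ℝ) < t ^ (2 * n + 2) := by positivity
      have h3 : (0:ℝ) < t ^ (n + 1) := by positivity
      linarith)

include h0 h1 in
theorem final_assembly : (∑' k : ℤ, t ^ (2 * (k : ℝ) ^ 2 - (k : ℝ)))
    = (∏' m : ℕ, (1 + t ^ (m + 1))) ^ 2 * ∏' m : ℕ, (1 - t ^ (m + 1)) := by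
  have h1p := master_one_sub h0 h1
  have h2p := master_one_sub_sq h0 h1
  have h4p := masterP4 h0 h1
  have hpp := masterPo h0 h1 1 0 (le_refl 1)
  have hodd := masterPo h0 h1 2 0 (by norm_num)
  have hev := masterPo h0 h1 2 1 (by norm_num)
  have ho3 := masterPo h0 h1 4 2 (by norm_num)
  have ho1 := masterPo h0 h1 4 0 (by norm_num)
  simp only [show ∀ j : ℕ, 1 * j + 0 + 1 = j + 1 from fun j => by ring] at hpp
  simp only [show ∀ j : ℕ, 2 * j + 0 + 1 = 2 * j + 1 from fun j => by ring] at hodd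
  simp only [show ∀ j : ℕ, 2 * j + 1 + 1 = 2 * j + 2 from fun j => by ring] at hev
  simp only [show ∀ j : ℕ, 4 * j + 2 + 1 = 4 * j + 3 from fun j => by ring] at ho3
  simp only [show ∀ j : ℕ, 4 * j + 0 + 1 = 4 * j + 1 from fun j => by ring] at ho1
  set P1 := ∏' m : ℕ, (1 - t ^ (m + 1))
  set P2 := ∏' m : ℕ, (1 - t ^ (2 * m + 2))
  set P4 := ∏' j : ℕ, (1 - (t ^ 4) ^ (j + 1))
  set PP := ∏' m : ℕ, (1 + t ^ (m + 1))
  set Podd := ∏' m : ℕ, (1 + t ^ (2 * m + 1))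
  set Pev := ∏' m : ℕ, (1 + t ^ (2 * m + 2))
  set Po3 := ∏' j : ℕ, (1 + t ^ (4 * j + 3))
  set Po1 := ∏' j : ℕ, (1 + t ^ (4 * j + 1))
  have r1 : P2 = P1 * PP := by
    refine HasProd.unique h2p.1 ?_
    have := h1p.1.mul hpp.1
    rwa [show (fun m : ℕ => (1 - t ^ (m + 1)) * (1 + t ^ (m + 1)))
      = (fun m : ℕ => 1 - t ^ (2 * m + 2)) from funext fun m => by
        rw [show 2 * m + 2 = (m + 1) + (m + 1) by ring, pow_add]; ring] at this
  have r2 : P4 = P2 * Pev := by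
    refine HasProd.unique h4p.1 ?_
    have := h2p.1.mul hev.1
    rwa [show (fun m : ℕ => (1 - t ^ (2 * m + 2)) * (1 + t ^ (2 * m + 2)))
      = (fun m : ℕ => 1 - (t ^ 4) ^ (m + 1)) from funext fun m => by
        rw [← pow_mul, show 4 * (m + 1) = (2 * m + 2) + (2 * m + 2) by ring, pow_add]
        ring] at this
  have r3 : PP = Podd * Pev := by
    refine HasProd.unique hpp.1 ?_
    apply HasProd.even_mul_odd
    · exact hodd.1
    · simpa only [show ∀ k : ℕ, 2 * k + 1 + 1 = 2 * k + 2 from fun k => by ring] using hev.1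
  have r4 : Podd = Po1 * Po3 := by
    refine HasProd.unique hodd.1 ?_
    apply HasProd.even_mul_odd
    · simpa only [show ∀ k : ℕ, 2 * (2 * k) + 1 = 4 * k + 1 from fun k => by ring] using ho1.1
    · simpa only [show ∀ k : ℕ, 2 * (2 * k + 1) + 1 = 4 * k + 3 from fun k => by ring]
        using ho3.1
  rw [main_limit h0 h1]
  show Po3 * Po1 * P4 = PP ^ 2 * P1
  rw [r4] at r3
  rw [r2, r1, r3]
  ring

end T

/-- The graded dimension of the vacuum module of the `A1`, `ℓ = 4` lattice vertex algebra
equals the Neveu–Schwarz symplectic fermion character: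
`Σ_{k ∈ 4ℤ} t^{(k−1)²/8 − 1/8} / ∏_{m≥1}(1−t^m) = ∏_{m≥1}(1+t^m)²`,
here stated for real `0 < t < 1` (fractional powers via `rpow`). -/
def eqv4 : ℤ ≃ {k : ℤ // (4 : ℤ) ∣ k} :=
  { toFun := fun n => ⟨4 * n, ⟨n, rfl⟩⟩
    invFun := fun k => k.1 / 4
    left_inv := fun n => by simp [Int.mul_ediv_cancel_left]
    right_inv := fun k => Subtype.ext (Int.mul_ediv_cancel' k.2) }

theorem stmt_14 (t : ℝ) (h0 : 0 < t) (h1 : t < 1) :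
    (∑' k : {k : ℤ // (4 : ℤ) ∣ k}, t ^ ((((k : ℤ) : ℝ) - 1) ^ 2 / 8 - 1/8))
        / ∏' m : ℕ, (1 - t ^ (m + 1))
      = ∏' m : ℕ, (1 + t ^ (m + 1)) ^ 2 := by
  have h1p := master_one_sub h0 h1
  have hpp := masterPo h0 h1 1 0 (le_refl 1)
  simp only [show ∀ j : ℕ, 1 * j + 0 + 1 = j + 1 from fun j => by ring] at hpp
  rw [div_eq_iff (ne_of_gt h1p.2)]
  have hnum : (∑' k : {k : ℤ // (4 : ℤ) ∣ k}, t ^ ((((k : ℤ) : ℝ) - 1) ^ 2 / 8 - 1/8))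
      = ∑' k : ℤ, t ^ (2 * (k : ℝ) ^ 2 - (k : ℝ)) := by
    rw [← Equiv.tsum_eq eqv4]
    apply tsum_congr
    intro n
    congr 1
    simp only [eqv4, Equiv.coe_fn_mk]
    push_cast
    ring
  rw [hnum, final_assembly h0 h1]
  congr 1
  have hsq : HasProd (fun m : ℕ => (1 + t ^ (m + 1)) ^ 2)
      ((∏' m : ℕ, (1 + t ^ (m + 1))) ^ 2) := by
    have := hpp.1.mul hpp.1
    simpa [sq] using this
  exact hsq.tprod_eq.symm
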